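/- Shear cancellation: let L₁, L₂ ∈ ℕ, i₁, i₂ ∈ {1,2} with i₁ ≠ i₂, and τ₁, τ₂ > 0 with 2τ₂ = 1/(2L₁) and 2L₂τ₁ an odd integer. Then the composition (y_{τ₂}^{(i₂;L₂)})² ∘ y_{τ₁}^{(i₁;L₁)} ∘ (y_{τ₂}^{(i₂;L₂)})² ∘ y_{τ₁}^{(i₁;L₁)} = Id as maps 𝕋² → 𝕋², where f² denotes f ∘ f. -/

import Mathlib

open MeasureTheory Filter

noncomputable section

instance : Fact ((0:ℝ) < 1) := ⟨one_pos⟩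

/-- The 1-dimensional torus `ℝ/ℤ`. -/
abbrev Torus : Type := AddCircle (1 : ℝ)

/-- The 2-dimensional torus `𝕋² = ℝ²/ℤ²`. -/
abbrev Torus2 : Type := Torus × Torus

/-- The representative of a point of the torus in `[0,1)`. -/
noncomputable def rep (x : Torus) : ℝ := (AddCircle.equivIco 1 0 x : ℝ)

/-- The sign (`+1` on even strips of width `1/(2L)`, `-1` on odd ones). -/
noncomputable def shearSign (L : ℕ) (c : Torus) : ℝ :=
  if Even ⌊(2 * L : ℝ) * rep c⌋ then 1 else -1

/-- The Lagrangian shear flow `y_t^{(i;L)} : 𝕋² → 𝕋²`, translating the coordinate `i`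
by `± t` according to the parity of the strip of width `1/(2L)` containing the
other coordinate. -/
noncomputable def shearFlow (i : Fin 2) (L : ℕ) (t : ℝ) (x : Torus2) : Torus2 :=
  if i = 0 then (x.1 + ((shearSign L x.2 * t : ℝ) : Torus), x.2)
  else (x.1, x.2 + ((shearSign L x.1 * t : ℝ) : Torus))

lemma rep_coe (x : ℝ) : rep ((x : ℝ) : Torus) = Int.fract x := by
  have := AddCircle.coe_equivIco_mk_apply (p := (1:ℝ)) x
  simpa [rep] using this

lemma shearSign_coe (L : ℕ) (x : ℝ) :
    shearSign L ((x : ℝ) : Torus) = if Even ⌊(2 * L : ℝ) * x⌋ then 1 else -1 := by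
  unfold shearSign
  rw [rep_coe]
  congr 1
  have h1 : (2 * L : ℝ) * Int.fract x = (2 * L : ℝ) * x - ((2 * L * ⌊x⌋ : ℤ) : ℝ) := by
    rw [Int.fract]; push_cast; ring
  rw [h1, Int.floor_sub_intCast]
  simp [Int.even_sub, Nat.even_mul, parity_simps]

lemma shearSign_flip (L : ℕ) (x r : ℝ) (n : ℤ) (hn : Odd n) (h : (2 * L : ℝ) * r = n) :
    shearSign L ((x + r : ℝ) : Torus) = - shearSign L ((x : ℝ) : Torus) := by
  rw [shearSign_coe, shearSign_coe]
  have h2 : (2 * L : ℝ) * (x + r) = (2 * L : ℝ) * x + n := by rw [mul_add, h]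
  rw [h2, Int.floor_add_intCast]
  have hne : ¬ Even n := Int.not_even_iff_odd.2 hn
  by_cases hp : Even ⌊(2 * L : ℝ) * x⌋ <;> simp [hp, Int.even_add, hne]

lemma shearSign_cases (L : ℕ) (c : Torus) :
    ∃ m : ℤ, Odd m ∧ shearSign L c = (m : ℝ) := by
  unfold shearSign
  split
  · exact ⟨1, odd_one, by norm_num⟩
  · exact ⟨-1, by decide, by norm_num⟩

lemma flow0_coe (L : ℕ) (t : ℝ) (u v : ℝ) :
    shearFlow 0 L t ((u : Torus), (v : Torus))
      = (((u + shearSign L ((v : ℝ) : Torus) * t : ℝ) : Torus), (v : Torus)) := by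
  rw [shearFlow, if_pos rfl, AddCircle.coe_add]

lemma flow1_coe (L : ℕ) (t : ℝ) (u v : ℝ) :
    shearFlow 1 L t ((u : Torus), (v : Torus))
      = ((u : Torus), ((v + shearSign L ((u : ℝ) : Torus) * t : ℝ) : Torus)) := by
  rw [shearFlow, if_neg (by decide), AddCircle.coe_add]

lemma core01 (L₁ L₂ : ℕ) (hL₁ : 0 < L₁) (τ₁ τ₂ : ℝ)
    (h₂ : 2 * τ₂ = 1 / (2 * L₁)) (n : ℤ) (hn : Odd n) (h₁ : (2 * L₂ : ℝ) * τ₁ = n)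
    (a b : ℝ) :
    shearFlow 1 L₂ τ₂ (shearFlow 1 L₂ τ₂ (shearFlow 0 L₁ τ₁
      (shearFlow 1 L₂ τ₂ (shearFlow 1 L₂ τ₂ (shearFlow 0 L₁ τ₁ (↑a, ↑b)))))) = (↑a, ↑b) := by
  have hL₁' : ((L₁ : ℝ)) ≠ 0 := Nat.cast_ne_zero.mpr hL₁.ne'
  set σ := shearSign L₁ ((b : ℝ) : Torus) with hσ
  obtain ⟨k, hk, hkσ⟩ := shearSign_cases L₁ ((b : ℝ) : Torus)
  rw [← hσ] at hkσ
  rw [flow0_coe, ← hσ, flow1_coe, flow1_coe]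
  set s := shearSign L₂ ((a + σ * τ₁ : ℝ) : Torus) with hs
  obtain ⟨m, hm, hms⟩ := shearSign_cases L₂ ((a + σ * τ₁ : ℝ) : Torus)
  rw [← hs] at hms
  rw [flow0_coe]
  -- sign flip in 2nd coordinate after shifting by 2 s τ₂ = s/(2L₁)
  have hassoc : b + s * τ₂ + s * τ₂ = b + (s * τ₂ + s * τ₂) := by ring
  have hflipb : shearSign L₁ ((b + s * τ₂ + s * τ₂ : ℝ) : Torus) = -σ := by
    rw [hassoc, shearSign_flip L₁ b _ m hm, ← hσ]
    rw [hms]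
    have h3 : (2 : ℝ) * L₁ * ((m : ℝ) * τ₂ + (m : ℝ) * τ₂) = (m : ℝ) * (2 * L₁ * (2 * τ₂)) := by
      ring
    rw [h3, h₂]
    field_simp
  rw [hflipb]
  have ha2 : a + σ * τ₁ + -σ * τ₁ = a := by ring
  rw [ha2]
  have hsa : shearSign L₂ ((a : ℝ) : Torus) = -s := by
    have h4 : (2 * L₂ : ℝ) * (σ * τ₁) = ((k * n : ℤ) : ℝ) := by
      rw [hkσ]; push_cast; rw [← h₁]; ring
    have := shearSign_flip L₂ a (σ * τ₁) (k * n) (hk.mul hn) h4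
    rw [← hs] at this
    linarith
  rw [flow1_coe, hsa, flow1_coe, hsa]
  have hb4 : b + s * τ₂ + s * τ₂ + -s * τ₂ + -s * τ₂ = b := by ring
  rw [hb4]

lemma core10 (L₁ L₂ : ℕ) (hL₁ : 0 < L₁) (τ₁ τ₂ : ℝ)
    (h₂ : 2 * τ₂ = 1 / (2 * L₁)) (n : ℤ) (hn : Odd n) (h₁ : (2 * L₂ : ℝ) * τ₁ = n)
    (a b : ℝ) :
    shearFlow 0 L₂ τ₂ (shearFlow 0 L₂ τ₂ (shearFlow 1 L₁ τ₁
      (shearFlow 0 L₂ τ₂ (shearFlow 0 L₂ τ₂ (shearFlow 1 L₁ τ₁ (↑a, ↑b)))))) = (↑a, ↑b) := by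
  have hL₁' : ((L₁ : ℝ)) ≠ 0 := Nat.cast_ne_zero.mpr hL₁.ne'
  set σ := shearSign L₁ ((a : ℝ) : Torus) with hσ
  obtain ⟨k, hk, hkσ⟩ := shearSign_cases L₁ ((a : ℝ) : Torus)
  rw [← hσ] at hkσ
  rw [flow1_coe, ← hσ, flow0_coe, flow0_coe]
  set s := shearSign L₂ ((b + σ * τ₁ : ℝ) : Torus) with hs
  obtain ⟨m, hm, hms⟩ := shearSign_cases L₂ ((b + σ * τ₁ : ℝ) : Torus)
  rw [← hs] at hms
  rw [flow1_coe]
  have hassoc : a + s * τ₂ + s * τ₂ = a + (s * τ₂ + s * τ₂) := by ring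
  have hflipa : shearSign L₁ ((a + s * τ₂ + s * τ₂ : ℝ) : Torus) = -σ := by
    rw [hassoc, shearSign_flip L₁ a _ m hm, ← hσ]
    rw [hms]
    have h3 : (2 : ℝ) * L₁ * ((m : ℝ) * τ₂ + (m : ℝ) * τ₂) = (m : ℝ) * (2 * L₁ * (2 * τ₂)) := by
      ring
    rw [h3, h₂]
    field_simp
  rw [hflipa]
  have hb2 : b + σ * τ₁ + -σ * τ₁ = b := by ring
  rw [hb2]
  have hsb : shearSign L₂ ((b : ℝ) : Torus) = -s := by
    have h4 : (2 * L₂ : ℝ) * (σ * τ₁) = ((k * n : ℤ) : ℝ) := by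
      rw [hkσ]; push_cast; rw [← h₁]; ring
    have := shearSign_flip L₂ b (σ * τ₁) (k * n) (hk.mul hn) h4
    rw [← hs] at this
    linarith
  rw [flow0_coe, hsb, flow0_coe, hsb]
  have ha4 : a + s * τ₂ + s * τ₂ + -s * τ₂ + -s * τ₂ = a := by ring
  rw [ha4]


/-- **Shear cancellation.** If `i₁ ≠ i₂`, `2τ₂ = 1/(2L₁)` and
`2L₂τ₁` is an odd integer, then
`(y_{τ₂}^{(i₂;L₂)})² ∘ y_{τ₁}^{(i₁;L₁)} ∘ (y_{τ₂}^{(i₂;L₂)})² ∘ y_{τ₁}^{(i₁;L₁)} = Id`. -/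
theorem shear_cancellation (L₁ L₂ : ℕ) (hL₁ : 0 < L₁) (hL₂ : 0 < L₂)
    (i₁ i₂ : Fin 2) (hne : i₁ ≠ i₂) (τ₁ τ₂ : ℝ) (hτ₁ : 0 < τ₁) (hτ₂ : 0 < τ₂)
    (h₂ : 2 * τ₂ = 1 / (2 * L₁))
    (h₁ : ∃ n : ℤ, Odd n ∧ (2 * L₂ : ℝ) * τ₁ = n) :
    (shearFlow i₂ L₂ τ₂) ∘ (shearFlow i₂ L₂ τ₂) ∘ (shearFlow i₁ L₁ τ₁) ∘
      (shearFlow i₂ L₂ τ₂) ∘ (shearFlow i₂ L₂ τ₂) ∘ (shearFlow i₁ L₁ τ₁) = id := by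

  obtain ⟨n, hn, h₁'⟩ := h₁
  funext x
  obtain ⟨c, d⟩ := x
  induction c using QuotientAddGroup.induction_on with | H a =>
  induction d using QuotientAddGroup.induction_on with | H b =>
  simp only [Function.comp_apply, id_eq]
  fin_cases i₁ <;> fin_cases i₂ <;>
    first
      | exact core01 L₁ L₂ hL₁ τ₁ τ₂ h₂ n hn h₁' a b
      | exact core10 L₁ L₂ hL₁ τ₁ τ₂ h₂ n hn h₁' a b
      | simp at hne

end
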